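/- On the Lie algebra r₃ (brackets [e₁,e₂]=e₂, [e₁,e₃]=e₂+e₃), consider the Lie affgebra bracket {x,y} = [x,y] + β₁η₁e₁ + (β₁ξ₂ + β₄(η₂-ξ₂))e₂ + (β₁ξ₃ + β₄(η₃-ξ₃))e₃ + s for x = Σξᵢeᵢ, y = Σηᵢeᵢ, s = N₁e₁+N₂e₂+N₃e₃, denoted F(β₁,β₄,N₁,N₂,N₃). Then F(β₁,β₄,N₁,N₂,N₃) and F(β₁',β₄',N₁',N₂',N₃') are isomorphic Lie affgebras if and only if β₁'=β₁, β₄'=β₄, N₁'=N₁, and there exist α₁,α₂,α₃ ∈ ℂ, α₄ ∈ ℂ* with N₂' = α₁(N₁-(β₁-β₄)(1-β₁)) - α₂(β₄-β₁)(1-β₁) + α₄N₂ + α₃N₃ and N₃' = α₂(N₁-(β₁-β₄)(1-β₁)) + α₄N₃. -/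

import Mathlib

variable {L : Type*} [LieRing L] [LieAlgebra ℂ L]

/-- The affine Lie bracket of the Lie affgebra `F(β₁,β₄,N₁,N₂,N₃)` on `r₃`,
expressed in the basis `b = (e₁,e₂,e₃)`:
`{x,y} = [x,y] + β₁η₁e₁ + (β₁ξ₂+β₄(η₂-ξ₂))e₂ + (β₁ξ₃+β₄(η₃-ξ₃))e₃ + s`,
`s = N₁e₁+N₂e₂+N₃e₃`. -/
noncomputable def affBracketF (b : Module.Basis (Fin 3) ℂ L) (β₁ β₄ N₁ N₂ N₃ : ℂ)
    (x y : L) : L :=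
  ⁅x, y⁆ + (β₁ * b.repr y 0 + N₁) • b 0
    + (β₁ * b.repr x 1 + β₄ * (b.repr y 1 - b.repr x 1) + N₂) • b 1
    + (β₁ * b.repr x 2 + β₄ * (b.repr y 2 - b.repr x 2) + N₃) • b 2

/-- An isomorphism of Lie affgebras on `L` (with the affine structure
`⟨a,b,c⟩ = a - b + c`): a bijective affine map intertwining the brackets. -/
def IsLieAffgebraIso (br br' : L → L → L) : Prop :=
  ∃ (T : L ≃ₗ[ℂ] L) (c : L), ∀ x y : L, T (br x y) + c = br' (T x + c) (T y + c)

lemma lie_coord (b : Module.Basis (Fin 3) ℂ L)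
    (h12 : ⁅b 0, b 1⁆ = b 1) (h13 : ⁅b 0, b 2⁆ = b 1 + b 2)
    (h23 : ⁅b 1, b 2⁆ = 0) (x y : L) :
    ⁅x, y⁆ = (b.repr x 0 * b.repr y 1 - b.repr x 1 * b.repr y 0
        + b.repr x 0 * b.repr y 2 - b.repr x 2 * b.repr y 0) • b 1
      + (b.repr x 0 * b.repr y 2 - b.repr x 2 * b.repr y 0) • b 2 := by
  have h21 : ⁅b 1, b 0⁆ = -b 1 := by rw [← lie_skew, h12]
  have h31 : ⁅b 2, b 0⁆ = -(b 1 + b 2) := by rw [← lie_skew, h13]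
  have h32 : ⁅b 2, b 1⁆ = 0 := by rw [← lie_skew, h23]; simp
  conv_lhs => rw [← b.sum_repr x, ← b.sum_repr y]
  simp only [Fin.sum_univ_three, add_lie, smul_lie, lie_add, lie_smul,
    h12, h13, h23, h21, h31, h32, lie_self, smul_zero, smul_neg, smul_add]
  module

lemma repr_map (b : Module.Basis (Fin 3) ℂ L) (T : L ≃ₗ[ℂ] L) (v : L) (i : Fin 3) :
    b.repr (T v) i = b.repr v 0 * b.repr (T (b 0)) i + b.repr v 1 * b.repr (T (b 1)) i
      + b.repr v 2 * b.repr (T (b 2)) i := by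
  conv_lhs => rw [← b.sum_repr v]
  simp only [Fin.sum_univ_three, map_add, map_smul, Finsupp.coe_add, Pi.add_apply,
    Finsupp.coe_smul, Pi.smul_apply, smul_eq_mul]

lemma raw (b : Module.Basis (Fin 3) ℂ L)
    (h12 : ⁅b 0, b 1⁆ = b 1) (h13 : ⁅b 0, b 2⁆ = b 1 + b 2)
    (h23 : ⁅b 1, b 2⁆ = 0) (T : L ≃ₗ[ℂ] L) (c : L)
    (β₁ β₄ N₁ N₂ N₃ β₁' β₄' N₁' N₂' N₃' : ℂ)
    (H : ∀ x y : L, T (affBracketF b β₁ β₄ N₁ N₂ N₃ x y) + c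
      = affBracketF b β₁' β₄' N₁' N₂' N₃' (T x + c) (T y + c))
    (x y : L) (i : Fin 3) :
    (β₁ * b.repr y 0 + N₁) * b.repr (T (b 0)) i
      + ((b.repr x 0 * b.repr y 1 - b.repr x 1 * b.repr y 0
          + b.repr x 0 * b.repr y 2 - b.repr x 2 * b.repr y 0)
        + (β₁ * b.repr x 1 + β₄ * (b.repr y 1 - b.repr x 1) + N₂)) * b.repr (T (b 1)) i
      + ((b.repr x 0 * b.repr y 2 - b.repr x 2 * b.repr y 0)
        + (β₁ * b.repr x 2 + β₄ * (b.repr y 2 - b.repr x 2) + N₃)) * b.repr (T (b 2)) i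
      + b.repr c i
    = (β₁' * (b.repr (T y) 0 + b.repr c 0) + N₁') * (if (0 : Fin 3) = i then 1 else 0)
      + (((b.repr (T x) 0 + b.repr c 0) * (b.repr (T y) 1 + b.repr c 1)
            - (b.repr (T x) 1 + b.repr c 1) * (b.repr (T y) 0 + b.repr c 0)
            + (b.repr (T x) 0 + b.repr c 0) * (b.repr (T y) 2 + b.repr c 2)
            - (b.repr (T x) 2 + b.repr c 2) * (b.repr (T y) 0 + b.repr c 0))
          + (β₁' * (b.repr (T x) 1 + b.repr c 1)
            + β₄' * ((b.repr (T y) 1 + b.repr c 1) - (b.repr (T x) 1 + b.repr c 1)) + N₂'))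
          * (if (1 : Fin 3) = i then 1 else 0)
      + (((b.repr (T x) 0 + b.repr c 0) * (b.repr (T y) 2 + b.repr c 2)
            - (b.repr (T x) 2 + b.repr c 2) * (b.repr (T y) 0 + b.repr c 0))
          + (β₁' * (b.repr (T x) 2 + b.repr c 2)
            + β₄' * ((b.repr (T y) 2 + b.repr c 2) - (b.repr (T x) 2 + b.repr c 2)) + N₃'))
          * (if (2 : Fin 3) = i then 1 else 0) := by
  have e := H x y
  simp only [affBracketF] at e
  rw [lie_coord b h12 h13 h23 x y, lie_coord b h12 h13 h23 (T x + c) (T y + c)] at e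
  have e' := congrArg (fun v => b.repr v i) e
  simp only [map_add, map_smul, Finsupp.coe_add, Finsupp.coe_smul, Pi.add_apply,
    Pi.smul_apply, Module.Basis.repr_self, Finsupp.single_apply, smul_eq_mul] at e'
  linear_combination e'


noncomputable def Tmap (b : Module.Basis (Fin 3) ℂ L) (α₁ α₂ α₃ α₄ : ℂ) : L →ₗ[ℂ] L :=
  b.constr ℂ ![b 0 + α₁ • b 1 + α₂ • b 2, α₄ • b 1, α₃ • b 1 + α₄ • b 2]

lemma Tmap_apply (b : Module.Basis (Fin 3) ℂ L) (α₁ α₂ α₃ α₄ : ℂ) (v : L) :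
    Tmap b α₁ α₂ α₃ α₄ v = (b.repr v 0) • b 0
      + (α₁ * b.repr v 0 + α₄ * b.repr v 1 + α₃ * b.repr v 2) • b 1
      + (α₂ * b.repr v 0 + α₄ * b.repr v 2) • b 2 := by
  conv_lhs => rw [← b.sum_repr v]
  simp only [Fin.sum_univ_three, map_add, map_smul, Tmap, Module.Basis.constr_basis,
    Matrix.cons_val_zero, Matrix.cons_val_one, Matrix.head_cons, Matrix.cons_val_two,
    Matrix.tail_cons]
  module

lemma Tmap_comp (b : Module.Basis (Fin 3) ℂ L) (α₁ α₂ α₃ α₄ : ℂ) (hα₄ : α₄ ≠ 0) :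
    (Tmap b α₁ α₂ α₃ α₄) ∘ₗ
      (Tmap b (-(α₁*α₄ - α₂*α₃)/(α₄*α₄)) (-α₂/α₄) (-α₃/(α₄*α₄)) (1/α₄)) = LinearMap.id := by
  apply b.ext
  intro i
  apply b.ext_elem
  intro j
  simp only [LinearMap.comp_apply, Tmap_apply, LinearMap.id_apply, map_add, map_smul,
    b.repr_self, Finsupp.smul_single, smul_eq_mul, mul_one, Finsupp.coe_add,
    Pi.add_apply, Finsupp.single_apply]
  fin_cases i <;> fin_cases j <;> simp <;> field_simp <;> ring

lemma Tmap_comp' (b : Module.Basis (Fin 3) ℂ L) (α₁ α₂ α₃ α₄ : ℂ) (hα₄ : α₄ ≠ 0) :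
    (Tmap b (-(α₁*α₄ - α₂*α₃)/(α₄*α₄)) (-α₂/α₄) (-α₃/(α₄*α₄)) (1/α₄)) ∘ₗ
      (Tmap b α₁ α₂ α₃ α₄) = LinearMap.id := by
  apply b.ext
  intro i
  apply b.ext_elem
  intro j
  simp only [LinearMap.comp_apply, Tmap_apply, LinearMap.id_apply, map_add, map_smul,
    b.repr_self, Finsupp.smul_single, smul_eq_mul, mul_one, Finsupp.coe_add,
    Pi.add_apply, Finsupp.single_apply]
  fin_cases i <;> fin_cases j <;> simp <;> field_simp <;> ring


set_option maxHeartbeats 1600000 in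
/-- Isomorphism criterion for the Lie affgebras `F(β₁,β₄,N₁,N₂,N₃)` on `r₃`. -/
theorem stmt17 (b : Module.Basis (Fin 3) ℂ L)
    (h12 : ⁅b 0, b 1⁆ = b 1) (h13 : ⁅b 0, b 2⁆ = b 1 + b 2)
    (h23 : ⁅b 1, b 2⁆ = 0)
    (β₁ β₄ N₁ N₂ N₃ β₁' β₄' N₁' N₂' N₃' : ℂ) :
    IsLieAffgebraIso (affBracketF b β₁ β₄ N₁ N₂ N₃)
        (affBracketF b β₁' β₄' N₁' N₂' N₃') ↔
      β₁' = β₁ ∧ β₄' = β₄ ∧ N₁' = N₁ ∧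
      ∃ α₁ α₂ α₃ α₄ : ℂ, α₄ ≠ 0 ∧
        N₂' = α₁ * (N₁ - (β₁ - β₄) * (1 - β₁)) - α₂ * (β₄ - β₁) * (1 - β₁)
          + α₄ * N₂ + α₃ * N₃ ∧
        N₃' = α₂ * (N₁ - (β₁ - β₄) * (1 - β₁)) + α₄ * N₃ := by
  constructor
  · rintro ⟨T, c, H⟩
    have R := raw b h12 h13 h23 T c β₁ β₄ N₁ N₂ N₃ β₁' β₄' N₁' N₂' N₃' H
    have A0 := R 0 0 0; have A1 := R 0 0 1; have A2 := R 0 0 2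
    have P0 := R (b 0) 0 0; have P1 := R (b 0) 0 1; have P2 := R (b 0) 0 2
    have Q0 := R 0 (b 0) 0; have Q1 := R 0 (b 0) 1; have Q2 := R 0 (b 0) 2
    have U0 := R 0 (b 1) 0; have U1 := R 0 (b 1) 1; have U2 := R 0 (b 1) 2
    have V0 := R 0 (b 2) 0; have V1 := R 0 (b 2) 1; have V2 := R 0 (b 2) 2
    have D0 := R (b 0) (b 1) 0; have D1 := R (b 0) (b 1) 1; have D2 := R (b 0) (b 1) 2
    have E0 := R (b 0) (b 2) 0; have E1 := R (b 0) (b 2) 1; have E2 := R (b 0) (b 2) 2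
    clear R H
    simp only [map_zero, Finsupp.coe_zero, Pi.zero_apply, Module.Basis.repr_self] at A0 A1 A2 P0 P1 P2 Q0 Q1 Q2 U0 U1 U2 V0 V1 V2 D0 D1 D2 E0 E1 E2
    norm_num [Finsupp.single_apply, Fin.ext_iff] at A0 A1 A2 P0 P1 P2 Q0 Q1 Q2 U0 U1 U2 V0 V1 V2 D0 D1 D2 E0 E1 E2
    have hT01 : b.repr (T (b 1)) 0 = 0 := by linear_combination D0 - P0 - U0 + A0
    have hT02 : b.repr (T (b 2)) 0 = 0 := by linear_combination E0 - P0 - V0 + A0 - hT01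
    have d011 : b.repr (T (b 1)) 1 = b.repr (T (b 0)) 0 * b.repr (T (b 1)) 1
        + b.repr (T (b 0)) 0 * b.repr (T (b 1)) 2 := by
      linear_combination D1 - P1 - U1 + A1 - (b.repr (T (b 0)) 1 + b.repr (T (b 0)) 2) * hT01
    have d012 : b.repr (T (b 1)) 2 = b.repr (T (b 0)) 0 * b.repr (T (b 1)) 2 := by
      linear_combination D2 - P2 - U2 + A2 - (b.repr (T (b 0)) 2) * hT01
    have d021 : b.repr (T (b 1)) 1 + b.repr (T (b 2)) 1
        = b.repr (T (b 0)) 0 * b.repr (T (b 2)) 1 + b.repr (T (b 0)) 0 * b.repr (T (b 2)) 2 := by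
      linear_combination E1 - P1 - V1 + A1 - (b.repr (T (b 0)) 1 + b.repr (T (b 0)) 2) * hT02
    have d022 : b.repr (T (b 1)) 2 + b.repr (T (b 2)) 2
        = b.repr (T (b 0)) 0 * b.repr (T (b 2)) 2 := by
      linear_combination E2 - P2 - V2 + A2 - (b.repr (T (b 0)) 2) * hT02
    have hT00ne : b.repr (T (b 0)) 0 ≠ 0 := by
      intro h0
      obtain ⟨v, hv⟩ := T.surjective (b 0)
      have hm := repr_map b T v 0
      rw [hv] at hm
      simp [hT01, hT02, h0] at hm
    have hβ₁ : β₁' = β₁ := by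
      have q : (β₁ - β₁') * b.repr (T (b 0)) 0 = 0 := by linear_combination Q0 - A0
      rcases mul_eq_zero.mp q with h | h
      · exact (sub_eq_zero.mp h).symm
      · exact absurd h hT00ne
    have hT00 : b.repr (T (b 0)) 0 = 1 := by
      by_contra hne
      have h1 : b.repr (T (b 0)) 0 - 1 ≠ 0 := sub_ne_zero_of_ne hne
      have e21 : b.repr (T (b 1)) 2 = 0 := by
        have q : (b.repr (T (b 0)) 0 - 1) * b.repr (T (b 1)) 2 = 0 := by linear_combination -d012
        exact (mul_eq_zero.mp q).resolve_left h1
      have e11 : b.repr (T (b 1)) 1 = 0 := by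
        have q : (b.repr (T (b 0)) 0 - 1) * b.repr (T (b 1)) 1 = 0 := by
          linear_combination -d011 - b.repr (T (b 0)) 0 * e21
        exact (mul_eq_zero.mp q).resolve_left h1
      have hTb1 : T (b 1) = 0 := by
        apply b.ext_elem
        intro i
        fin_cases i <;> simp [hT01, e11, e21]
      exact b.ne_zero 1 (T.map_eq_zero_iff.mp hTb1)
    have hT21 : b.repr (T (b 1)) 2 = 0 := by linear_combination -d011 - (b.repr (T (b 1)) 1 + b.repr (T (b 1)) 2) * hT00
    have hT22 : b.repr (T (b 2)) 2 = b.repr (T (b 1)) 1 := by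
      linear_combination -d021 - (b.repr (T (b 2)) 1 + b.repr (T (b 2)) 2) * hT00
    have hT11ne : b.repr (T (b 1)) 1 ≠ 0 := by
      intro h0
      have hTb1 : T (b 1) = 0 := by
        apply b.ext_elem
        intro i
        fin_cases i <;> simp [hT01, h0, hT21]
      exact b.ne_zero 1 (T.map_eq_zero_iff.mp hTb1)
    have E1eq : (β₄ - β₄' - b.repr c 0) * b.repr (T (b 1)) 1 = 0 := by
      linear_combination U1 - A1 - (b.repr c 1 + b.repr c 2) * hT01 + b.repr c 0 * hT21
    have hb4c : β₄ - β₄' - b.repr c 0 = 0 := (mul_eq_zero.mp E1eq).resolve_right hT11ne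
    have E2eq : (β₄ - β₄' - b.repr c 0) * b.repr (T (b 2)) 1
        = b.repr c 0 * b.repr (T (b 1)) 1 := by
      linear_combination V1 - A1 - (b.repr c 1 + b.repr c 2) * hT02 + b.repr c 0 * hT22
    have hc0 : b.repr c 0 = 0 := by
      have q : b.repr c 0 * b.repr (T (b 1)) 1 = 0 := by
        linear_combination -E2eq + b.repr (T (b 2)) 1 * hb4c
      exact (mul_eq_zero.mp q).resolve_right hT11ne
    have hβ₄ : β₄' = β₄ := by linear_combination -hb4c - hc0
    have hc2 : b.repr c 2 = (β₄ - β₁) * b.repr (T (b 0)) 2 := by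
      linear_combination Q2 - A2 + b.repr (T (b 0)) 2 * hc0 - b.repr c 2 * hT00
        + b.repr (T (b 0)) 2 * hβ₄
    have hc1 : b.repr c 1 = (β₄ - β₁) * (b.repr (T (b 0)) 1 - b.repr (T (b 0)) 2) := by
      linear_combination Q1 - A1 + (b.repr (T (b 0)) 1 + b.repr (T (b 0)) 2) * hc0
        - (b.repr c 1 + b.repr c 2) * hT00 + b.repr (T (b 0)) 1 * hβ₄ - hc2
    have hN₁ : N₁' = N₁ := by
      linear_combination -A0 + N₁ * hT00 + N₂ * hT01 + N₃ * hT02 + (1 - β₁') * hc0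
    have hN₂ : N₂' = b.repr (T (b 0)) 1 * (N₁ - (β₁ - β₄) * (1 - β₁))
        - b.repr (T (b 0)) 2 * (β₄ - β₁) * (1 - β₁)
        + b.repr (T (b 1)) 1 * N₂ + b.repr (T (b 2)) 1 * N₃ := by
      linear_combination -A1 + (1 - β₁) * hc1 - b.repr c 1 * hβ₁
    have hN₃ : N₃' = b.repr (T (b 0)) 2 * (N₁ - (β₁ - β₄) * (1 - β₁))
        + b.repr (T (b 1)) 1 * N₃ := by
      linear_combination -A2 + (1 - β₁) * hc2 - b.repr c 2 * hβ₁ + N₃ * hT22 + N₂ * hT21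
    exact ⟨hβ₁, hβ₄, hN₁, b.repr (T (b 0)) 1, b.repr (T (b 0)) 2, b.repr (T (b 2)) 1,
      b.repr (T (b 1)) 1, hT11ne, hN₂, hN₃⟩
  · rintro ⟨rfl, rfl, rfl, α₁, α₂, α₃, α₄, hα₄, hN2, hN3⟩
    refine ⟨LinearEquiv.ofLinear (Tmap b α₁ α₂ α₃ α₄)
        (Tmap b (-(α₁*α₄ - α₂*α₃)/(α₄*α₄)) (-α₂/α₄) (-α₃/(α₄*α₄)) (1/α₄))
        (Tmap_comp b α₁ α₂ α₃ α₄ hα₄) (Tmap_comp' b α₁ α₂ α₃ α₄ hα₄),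
      ((β₄'-β₁')*(α₁-α₂)) • b 1 + ((β₄'-β₁')*α₂) • b 2, ?_⟩
    intro x y
    simp only [LinearEquiv.ofLinear_apply]
    simp only [affBracketF]
    rw [lie_coord b h12 h13 h23 x y, lie_coord b h12 h13 h23]
    apply b.ext_elem
    intro j
    simp only [Tmap_apply, map_add, map_smul, Finsupp.coe_add, Finsupp.coe_smul,
      Pi.add_apply, Pi.smul_apply, b.repr_self, Finsupp.single_apply, smul_eq_mul]
    fin_cases j <;> simp
    · linear_combination -hN2
    · linear_combination -hN3
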